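/- For the linear loss, every training sample is activated at every step, the result of one epoch of SGD over any sub-multiset T' of the training data is w*(T') = w⁰ + Σ_{(x,y)∈T'} α·y·(η⊗x) (independently of the processing order), and the sub-multiset T* := {(x,y) ∈ T : y_test·α·y·⟨η⊗x, x_test⟩ > 0} of 'good' samples maximizes the quantity y_test·⟨w*(T'), x_test⟩ over all sub-multisets T' ⊆ T, i.e. y_test·⟨w*(T*), x_test⟩ ≥ y_test·⟨w*(T'), x_test⟩ for every T' ⊆ T. -/
import Mathlib


open Classical

/-- One SGD update for the linear loss `L(s) = -α (s + β)` with learning-rate vector `η`: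
`w ↦ w + α y (η ⊗ x)`. -/
noncomputable def linStep (d : ℕ) (α : ℝ) (η : Fin d → ℝ)
    (w : Fin d → ℝ) (p : (Fin d → ℝ) × ℝ) : Fin d → ℝ :=
  fun i => w i + α * p.2 * (η i * p.1 i)

/-- `w*(T') = w⁰ + Σ_{(x,y) ∈ T'} α y (η ⊗ x)`. -/
noncomputable def wStar (d : ℕ) (α : ℝ) (η w0 : Fin d → ℝ)
    (T : Multiset ((Fin d → ℝ) × ℝ)) : Fin d → ℝ :=
  fun i => w0 i + (T.map (fun p => α * p.2 * (η i * p.1 i))).sum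

/-- Dot product on `ℝ^d`. -/
noncomputable def dotP (d : ℕ) (a b : Fin d → ℝ) : ℝ := ∑ i, a i * b i

/-- For linear loss: every sample is always activated (the derivative of the loss never
vanishes), the SGD update is exactly `linStep`, one epoch of SGD over any sub-multiset `T'`
of `T` (processed in any order) yields `w*(T')` independently of the order, and the
sub-multiset `T*` of good samples maximizes `y_test ⟨w*(T'), x_test⟩` over all `T' ⊆ T`. -/


lemma derivLin (α β : ℝ) (s : ℝ) : deriv (fun t : ℝ => -α * (t + β)) s = -α := by
  have h : HasDerivAt (fun t : ℝ => -α * (t + β)) (-α * 1) s :=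
    (((hasDerivAt_id s).add_const β)).const_mul (-α)
  simpa using h.deriv

lemma foldl_linStep (d : ℕ) (α : ℝ) (η : Fin d → ℝ)
    (l : List ((Fin d → ℝ) × ℝ)) (w : Fin d → ℝ) :
    l.foldl (linStep d α η) w = wStar d α η w (l : Multiset ((Fin d → ℝ) × ℝ)) := by
  induction l generalizing w with
  | nil => funext i; simp [wStar]
  | cons p l ih =>
      funext i
      simp only [List.foldl_cons, ih, wStar, linStep]
      simp [Multiset.map_cons, Multiset.sum_cons]
      ring

lemma dot_wStar (d : ℕ) (α : ℝ) (η w0 xtest : Fin d → ℝ) (ytest : ℝ)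
    (T : Multiset ((Fin d → ℝ) × ℝ)) :
    ytest * dotP d (wStar d α η w0 T) xtest =
      ytest * dotP d w0 xtest +
        (T.map (fun p => ytest * (α * p.2) * dotP d (fun i => η i * p.1 i) xtest)).sum := by
  induction T using Multiset.induction_on with
  | empty => simp [wStar, dotP]
  | cons p s ih =>
      simp only [wStar, dotP, Multiset.map_cons, Multiset.sum_cons] at ih ⊢
      have e1 : (∑ x : Fin d,
          (w0 x + (α * p.2 * (η x * p.1 x)
            + (Multiset.map (fun p => α * p.2 * (η x * p.1 x)) s).sum)) * xtest x)
          = (∑ x : Fin d, (α * p.2) * (η x * p.1 x * xtest x)) +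
            ∑ x : Fin d,
              (w0 x + (Multiset.map (fun p => α * p.2 * (η x * p.1 x)) s).sum) * xtest x := by
        rw [← Finset.sum_add_distrib]
        exact Finset.sum_congr rfl fun i _ => by ring
      rw [e1, ← Finset.mul_sum, mul_add, ih]
      ring

theorem stmt0 (d : ℕ) (α β : ℝ) (hα : 0 < α) (η : Fin d → ℝ) (hη : ∀ i, 0 ≤ η i)
    (w0 xtest : Fin d → ℝ) (ytest : ℝ) (hytest : ytest = 1 ∨ ytest = -1)
    (T : Multiset ((Fin d → ℝ) × ℝ)) (hT : ∀ p ∈ T, p.2 = 1 ∨ p.2 = -1) :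
    -- every training sample is activated at every step: the loss derivative never vanishes
    (∀ s : ℝ, deriv (fun t : ℝ => -α * (t + β)) s ≠ 0) ∧
    -- the SGD update for the linear loss is exactly `linStep`
    (∀ w : Fin d → ℝ, ∀ p : (Fin d → ℝ) × ℝ,
      (fun i => w i - η i * (deriv (fun t : ℝ => -α * (t + β)) (p.2 * dotP d w p.1)
          * (p.2 * p.1 i)))
        = linStep d α η w p) ∧
    -- one epoch over any sub-multiset, processed in any order, yields `w*(T')`
    (∀ T' : Multiset ((Fin d → ℝ) × ℝ), T' ≤ T →
      ∀ l : List ((Fin d → ℝ) × ℝ), (l : Multiset ((Fin d → ℝ) × ℝ)) = T' →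
        l.foldl (linStep d α η) w0 = wStar d α η w0 T') ∧
    -- the good sub-multiset `T*` maximizes `y_test ⟨w*(T'), x_test⟩`
    (∀ T' : Multiset ((Fin d → ℝ) × ℝ), T' ≤ T →
      ytest * dotP d (wStar d α η w0 T') xtest ≤
        ytest * dotP d (wStar d α η w0
          (T.filter (fun p =>
            0 < ytest * (α * p.2) * dotP d (fun i => η i * p.1 i) xtest))) xtest) := by

  have hd : ∀ s : ℝ, deriv (fun t : ℝ => -α * (t + β)) s = -α := derivLin α β
  refine ⟨fun s => by rw [hd]; exact neg_ne_zero.mpr (ne_of_gt hα), ?_, ?_, ?_⟩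
  · intro w p
    funext i
    rw [hd]
    simp [linStep]
    ring
  · intro T' _ l hl
    rw [foldl_linStep, hl]
  · intro T' hT'
    set c : ((Fin d → ℝ) × ℝ) → ℝ :=
      fun p => ytest * (α * p.2) * dotP d (fun i => η i * p.1 i) xtest with hc
    rw [dot_wStar, dot_wStar]
    gcongr
    -- ∑ over T' c ≤ ∑ over T.filter (0 < c) c
    have h1 : (T'.map c).sum ≤ ((T'.filter (fun p => 0 < c p)).map c).sum := by
      have := Multiset.filter_add_not (fun p => 0 < c p) T'
      calc (T'.map c).sum
          = ((T'.filter (fun p => 0 < c p)).map c).sum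
            + ((T'.filter (fun p => ¬ 0 < c p)).map c).sum := by
              rw [← Multiset.sum_add, ← Multiset.map_add, this]
        _ ≤ ((T'.filter (fun p => 0 < c p)).map c).sum + 0 := by
              gcongr
              have h0 : ((T'.filter (fun p => ¬ 0 < c p)).map (fun p => -(c p))).sum
                  = -((T'.filter (fun p => ¬ 0 < c p)).map c).sum := Multiset.sum_map_neg
              have hn : 0 ≤ ((T'.filter (fun p => ¬ 0 < c p)).map (fun p => -(c p))).sum := by
                apply Multiset.sum_nonneg
                intro x hx
                obtain ⟨p, hp, rfl⟩ := Multiset.mem_map.mp hx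
                exact neg_nonneg.mpr (le_of_not_gt ((Multiset.mem_filter.mp hp).2))
              linarith
        _ = _ := add_zero _
    have h2 : ((T'.filter (fun p => 0 < c p)).map c).sum
        ≤ ((T.filter (fun p => 0 < c p)).map c).sum := by
      have hle : T'.filter (fun p => 0 < c p) ≤ T.filter (fun p => 0 < c p) :=
        Multiset.filter_le_filter _ hT'
      obtain ⟨u, hu⟩ := Multiset.le_iff_exists_add.mp hle
      rw [hu, Multiset.map_add, Multiset.sum_add]
      have : 0 ≤ (u.map c).sum := by
        apply Multiset.sum_nonneg
        intro x hx
        obtain ⟨p, hp, rfl⟩ := Multiset.mem_map.mp hx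
        have : p ∈ T.filter (fun p => 0 < c p) := by rw [hu]; exact Multiset.mem_add.mpr (Or.inr hp)
        exact le_of_lt ((Multiset.mem_filter.mp this).2)
      linarith
    exact h1.trans h2
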